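/- arXiv:1904.06425 — 2 statements merged into one kernel-verified Lean document; each statement's English description precedes it below -/
import Mathlib

section
/- For the complete B-ary tree of depth L, the number of maximal covered nodes of any lexicographic leaf interval T satisfies the bound 2B·⌈log_B(|T|)⌉ when |T| ≥ 2, and equals 1 when T is the full leaf-set of a single node. -/
/-- A node of the complete `B`-ary tree of depth `L`: a node at depth `d ≤ L`
is identified by its index `idx < B ^ d` among the depth-`d` nodes in
left-to-right (lexicographic) order.  A leaf is a node of depth `L`. -/
structure TreeNode (B L : ℕ) where
  depth : ℕ
  idx : ℕ
  depth_le : depth ≤ L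
  idx_lt : idx < B ^ depth

namespace TreeNode

instance {B L : ℕ} : DecidableEq (TreeNode B L) := fun u v =>
  decidable_of_iff (u.depth = v.depth ∧ u.idx = v.idx) (by
    cases u; cases v; simp [TreeNode.mk.injEq])

/-- The set of leaves (identified with numbers `< B ^ L` in lexicographic
order) descending from a node. -/
def leafSet {B L : ℕ} (u : TreeNode B L) : Set ℕ :=
  {x | x < B ^ L ∧ x / B ^ (L - u.depth) = u.idx}

/-- `u` is a (weak) prefix/ancestor of `v`. -/
def IsPrefix {B L : ℕ} (u v : TreeNode B L) : Prop :=
  u.depth ≤ v.depth ∧ v.idx / B ^ (v.depth - u.depth) = u.idx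

/-- `u` is a strict prefix / strict ancestor of `v`. -/
def IsStrictPrefix {B L : ℕ} (u v : TreeNode B L) : Prop :=
  u.depth < v.depth ∧ v.idx / B ^ (v.depth - u.depth) = u.idx

/-- A node is covered by a leaf set `T` if all its leaf-descendants lie in `T`. -/
def covered {B L : ℕ} (T : Set ℕ) (u : TreeNode B L) : Prop :=
  u.leafSet ⊆ T

/-- A node is subsumed by `T` if some strict ancestor of it is covered by `T`. -/
def subsumed {B L : ℕ} (T : Set ℕ) (u : TreeNode B L) : Prop :=
  ∃ v : TreeNode B L, v.IsStrictPrefix u ∧ v.covered T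

/-- Maximal covered node: covered, with no covered strict ancestor. -/
def maximalCovered {B L : ℕ} (T : Set ℕ) (u : TreeNode B L) : Prop :=
  u.covered T ∧ ¬ u.subsumed T

end TreeNode

namespace TreeNode

variable {B L : ℕ}

lemma ext' {u v : TreeNode B L} (h1 : u.depth = v.depth) (h2 : u.idx = v.idx) : u = v := by
  cases u; cases v; simp_all

lemma mul_lt_succ_mul (i m : ℕ) (hm : 0 < m) : i * m < (i + 1) * m := by nlinarith

lemma leafSet_eq (hB : 0 < B) (u : TreeNode B L) :
    u.leafSet = Set.Ico (u.idx * B ^ (L - u.depth)) ((u.idx + 1) * B ^ (L - u.depth)) := by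
  have hm : 0 < B ^ (L - u.depth) := pow_pos hB _
  ext x
  simp only [leafSet, Set.mem_setOf_eq, Set.mem_Ico]
  constructor
  · rintro ⟨hx, hdiv⟩
    rw [← hdiv]
    refine ⟨Nat.div_mul_le_self x _, ?_⟩
    calc x < x / B ^ (L - u.depth) * B ^ (L - u.depth) + B ^ (L - u.depth) :=
          Nat.lt_div_mul_add hm
      _ = (x / B ^ (L - u.depth) + 1) * B ^ (L - u.depth) := by ring
  · rintro ⟨h1, h2⟩
    have hp : B ^ u.depth * B ^ (L - u.depth) = B ^ L := by
      rw [← pow_add]; congr 1; have := u.depth_le; omega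
    have hx : x < B ^ L := by
      have h3 : (u.idx + 1) * B ^ (L - u.depth) ≤ B ^ u.depth * B ^ (L - u.depth) :=
        Nat.mul_le_mul_right _ u.idx_lt
      exact lt_of_lt_of_le h2 (le_of_le_of_eq h3 hp)
    exact ⟨hx, Nat.div_eq_of_lt_le h1 h2⟩

lemma covered_iff (hB : 0 < B) (u : TreeNode B L) {a b : ℕ} :
    u.covered (Set.Ico a b) ↔
      a ≤ u.idx * B ^ (L - u.depth) ∧ (u.idx + 1) * B ^ (L - u.depth) ≤ b := by
  have hm : 0 < B ^ (L - u.depth) := pow_pos hB _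
  rw [covered, leafSet_eq hB, Set.Ico_subset_Ico_iff (mul_lt_succ_mul _ _ hm)]

/-- If the leaf set of `u` is contained in that of `w`, then `w` is a (weak) prefix of `u`. -/
lemma prefix_of_leafSet_subset (hB : 2 ≤ B) {u w : TreeNode B L}
    (h : u.leafSet ⊆ w.leafSet) : w.IsPrefix u := by
  have hB0 : 0 < B := by omega
  have hm : 0 < B ^ (L - u.depth) := pow_pos hB0 _
  have hmw : 0 < B ^ (L - w.depth) := pow_pos hB0 _
  rw [leafSet_eq hB0, leafSet_eq hB0,
    Set.Ico_subset_Ico_iff (mul_lt_succ_mul _ _ hm)] at h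
  obtain ⟨h1, h2⟩ := h
  have e1 : (u.idx + 1) * B ^ (L - u.depth) = u.idx * B ^ (L - u.depth) + B ^ (L - u.depth) := by
    ring
  have e2 : (w.idx + 1) * B ^ (L - w.depth) = w.idx * B ^ (L - w.depth) + B ^ (L - w.depth) := by
    ring
  have hle : B ^ (L - u.depth) ≤ B ^ (L - w.depth) := by omega
  have hdep : w.depth ≤ u.depth := by
    have := (Nat.pow_le_pow_iff_right hB).mp hle
    have hu := u.depth_le
    have hw := w.depth_le
    omega
  have hsplit : B ^ (L - w.depth) = B ^ (L - u.depth) * B ^ (u.depth - w.depth) := by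
    rw [← pow_add]; congr 1; have hu := u.depth_le; omega
  refine ⟨hdep, Nat.div_eq_of_lt_le ?_ ?_⟩
  · have h1' : w.idx * B ^ (u.depth - w.depth) * B ^ (L - u.depth) ≤
        u.idx * B ^ (L - u.depth) := by
      calc w.idx * B ^ (u.depth - w.depth) * B ^ (L - u.depth)
          = w.idx * (B ^ (L - u.depth) * B ^ (u.depth - w.depth)) := by ring
        _ = w.idx * B ^ (L - w.depth) := by rw [← hsplit]
        _ ≤ u.idx * B ^ (L - u.depth) := h1
    exact Nat.le_of_mul_le_mul_right h1' hm
  · have h2' : (u.idx + 1) * B ^ (L - u.depth) ≤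
        (w.idx + 1) * B ^ (u.depth - w.depth) * B ^ (L - u.depth) := by
      calc (u.idx + 1) * B ^ (L - u.depth) ≤ (w.idx + 1) * B ^ (L - w.depth) := h2
        _ = (w.idx + 1) * B ^ (u.depth - w.depth) * B ^ (L - u.depth) := by
            rw [hsplit]; ring
    exact Nat.le_of_mul_le_mul_right h2' hm

/-- Part 2: if `[a,b)` is exactly the leaf set of `w`, the maximal covered nodes are `{w}`. -/
lemma maximal_eq_singleton (hB : 2 ≤ B) {a b : ℕ} (w : TreeNode B L)
    (hw : w.leafSet = Set.Ico a b) :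
    {u : TreeNode B L | u.maximalCovered (Set.Ico a b)} = {w} := by
  ext u
  simp only [Set.mem_setOf_eq, Set.mem_singleton_iff]
  constructor
  · rintro ⟨hcov, hnsub⟩
    rw [covered, ← hw] at hcov
    have hpre := prefix_of_leafSet_subset hB hcov
    by_contra hne
    rcases Nat.lt_or_ge w.depth u.depth with hlt | hge
    · exact hnsub ⟨w, ⟨hlt, hpre.2⟩, by rw [covered, hw]⟩
    · have hdeq : w.depth = u.depth := le_antisymm hpre.1 hge
      have : u.idx = w.idx := by
        have := hpre.2
        rw [hdeq] at this
        simpa using this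
      exact hne (ext' hdeq.symm this)
  · rintro rfl
    refine ⟨by rw [covered, hw], ?_⟩
    rintro ⟨v, hsp, hcov⟩
    rw [covered, ← hw] at hcov
    have hpre := prefix_of_leafSet_subset hB hcov
    exact absurd hsp.1 (not_lt.mpr hpre.1)

/-- Part 1: the counting bound. -/
lemma count_bound (hB : 2 ≤ B) {a b : ℕ} (hn : 2 ≤ b - a) :
    {u : TreeNode B L | u.maximalCovered (Set.Ico a b)}.ncard
      ≤ 2 * B * Nat.clog B (b - a) := by
  have hB0 : 0 < B := by omega
  have hB1 : 1 < B := hB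
  set n := b - a with hn_def
  set k := Nat.clog B n with hk_def
  have hk1 : 1 ≤ k := Nat.clog_pos hB1 hn
  set S := {u : TreeNode B L | u.maximalCovered (Set.Ico a b)} with hS_def
  -- covered nodes have subtree size at most n
  have size_le : ∀ u : TreeNode B L, u.covered (Set.Ico a b) → B ^ (L - u.depth) ≤ n := by
    intro u hc
    rw [covered_iff hB0] at hc
    obtain ⟨h1, h2⟩ := hc
    have e : (u.idx + 1) * B ^ (L - u.depth) = u.idx * B ^ (L - u.depth) + B ^ (L - u.depth) := by
      ring
    omega
  -- split
  set Slo := {u : TreeNode B L | u ∈ S ∧ B ^ (L - u.depth) < n} with hSlo_def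
  set Shi := {u : TreeNode B L | u ∈ S ∧ n ≤ B ^ (L - u.depth)} with hShi_def
  -- Shi is a subsingleton
  have hi_sub : Shi.Subsingleton := by
    have aux : ∀ u ∈ Shi, ∀ v ∈ Shi, u.idx < v.idx → False := by
      rintro u ⟨⟨hcu, -⟩, hu⟩ v ⟨⟨hcv, -⟩, hv⟩ hlt
      have h1 := (covered_iff hB0 u).mp hcu
      have h2 := (covered_iff hB0 v).mp hcv
      have hmu : B ^ (L - u.depth) = n := le_antisymm (size_le u hcu) hu
      have hmv : B ^ (L - v.depth) = n := le_antisymm (size_le v hcv) hv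
      have key : (u.idx + 2) * n ≤ (v.idx + 1) * n := Nat.mul_le_mul_right _ (by omega)
      have e1 : (u.idx + 2) * n = u.idx * n + 2 * n := by ring
      have e2 : (v.idx + 1) * n = v.idx * n + n := by ring
      rw [hmu] at h1
      rw [hmv] at h2
      omega
    intro u hu v hv
    rcases Nat.lt_trichotomy u.idx v.idx with h | h | h
    · exact absurd (aux u hu v hv h) (by simp)
    · obtain ⟨⟨hcu, -⟩, hu'⟩ := hu
      obtain ⟨⟨hcv, -⟩, hv'⟩ := hv
      have hmu : B ^ (L - u.depth) = n := le_antisymm (size_le u hcu) hu'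
      have hmv : B ^ (L - v.depth) = n := le_antisymm (size_le v hcv) hv'
      have : L - u.depth = L - v.depth := Nat.pow_right_injective hB (by simpa using hmu.trans hmv.symm)
      have hud := u.depth_le
      have hvd := v.depth_le
      exact ext' (by omega) h
    · exact absurd (aux v hv u hu h) (by simp)
  -- the target finset for Slo
  set F : Finset (ℕ × ℕ) :=
    (Finset.range k).biUnion (fun j =>
      (Finset.Ico ((a + B ^ j - 1) / B ^ j) ((a + B ^ j - 1) / B ^ j + (B - 1)) ∪
       Finset.Ico (b / B ^ j + 1 - B) (b / B ^ j)).image (fun i => (L - j, i))) with hF_def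
  set ψ : TreeNode B L → ℕ × ℕ := fun u => (u.depth, u.idx) with hψ_def
  have hψ_inj : Function.Injective ψ := by
    intro u v h
    simp only [hψ_def, Prod.mk.injEq] at h
    exact ext' h.1 h.2
  -- the key containment
  have lo_mem : ∀ u ∈ Slo, ψ u ∈ F := by
    rintro u ⟨⟨hcov, hnsub⟩, hlt⟩
    set j := L - u.depth with hj_def
    have hm : 0 < B ^ j := pow_pos hB0 _
    have hjk : j < k := by
      by_contra hc
      have h1 : n ≤ B ^ k := Nat.le_pow_clog hB1 n
      have h2 : B ^ k ≤ B ^ j := Nat.pow_le_pow_right (by omega) (by omega)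
      omega
    have hcov' := (covered_iff hB0 u).mp hcov
    obtain ⟨ha1, ha2⟩ := hcov'
    have hdL : L - j = u.depth := by have := u.depth_le; omega
    rw [Finset.mem_biUnion]
    refine ⟨j, Finset.mem_range.mpr hjk, ?_⟩
    rw [Finset.mem_image]
    refine ⟨u.idx, ?_, by rw [hψ_def, hdL]⟩
    rw [Finset.mem_union]
    -- case on depth
    rcases Nat.eq_zero_or_pos u.depth with hd0 | hdpos
    · -- root: a must be 0
      have hidx : u.idx = 0 := by
        have := u.idx_lt
        rw [hd0] at this
        simpa using Nat.lt_one_iff.mp (by simpa using this)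
      have ha0 : a = 0 := by
        rw [hidx] at ha1
        simpa using ha1
      left
      rw [Finset.mem_Ico]
      have hc0 : (a + B ^ j - 1) / B ^ j = 0 := by
        apply Nat.div_eq_of_lt
        omega
      rw [hc0, hidx]
      omega
    · -- non-root: use the parent
      obtain ⟨d, hd⟩ : ∃ d, u.depth = d + 1 := ⟨u.depth - 1, by omega⟩
      have hdL' : d + 1 ≤ L := hd ▸ u.depth_le
      have hqlt : u.idx / B < B ^ d := by
        rw [Nat.div_lt_iff_lt_mul hB0, ← pow_succ]
        exact hd ▸ u.idx_lt
      set p : TreeNode B L := ⟨d, u.idx / B, by omega, hqlt⟩ with hp_def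
      have hsp : p.IsStrictPrefix u := by
        refine ⟨by simp [hp_def, hd], ?_⟩
        simp only [hp_def, hd]
        norm_num
      have hpnc : ¬ p.covered (Set.Ico a b) := fun h => hnsub ⟨p, hsp, h⟩
      rw [covered_iff hB0] at hpnc
      simp only [hp_def] at hpnc
      have hLd : L - d = j + 1 := by omega
      rw [hLd, pow_succ] at hpnc
      set m := B ^ j with hm_def
      set i := u.idx with hi_def
      set q := i / B with hq_def
      have hq1 : q * B ≤ i := Nat.div_mul_le_self i B
      have hq2 : i < q * B + B := Nat.lt_div_mul_add hB0
      have hji : L - u.depth = j := rfl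
      rcases not_and_or.mp hpnc with hL | hR
      · -- left fringe
        left
        push_neg at hL
        set c := (a + m - 1) / m with hc_def
        have hc_le : a ≤ c * m := by
          have h3 := Nat.div_add_mod (a + m - 1) m
          have h4 : (a + m - 1) % m < m := Nat.mod_lt _ hm
          have h5 : m * ((a + m - 1) / m) = c * m := by rw [hc_def]; ring
          omega
        have hc_ge : c ≤ i := by
          have : c < i + 1 := by
            rw [hc_def, Nat.div_lt_iff_lt_mul hm]
            have e : (i + 1) * m = i * m + m := by ring
            omega
          omega
        have key : q * B < c := by
          have h6 : q * B * m < c * m := by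
            calc q * B * m = q * (m * B) := by ring
              _ < a := hL
              _ ≤ c * m := hc_le
          exact lt_of_mul_lt_mul_right h6 (Nat.zero_le m)
        rw [Finset.mem_Ico]
        exact ⟨hc_ge, by omega⟩
      · -- right fringe
        right
        push_neg at hR
        set f := b / m with hf_def
        have h_lt_f : i < f := by
          have : i + 1 ≤ f := by
            rw [hf_def, Nat.le_div_iff_mul_le hm]
            exact ha2
          omega
        have h_f : f * m ≤ b := Nat.div_mul_le_self b m
        have key : f < (q + 1) * B := by
          have h6 : f * m < (q + 1) * B * m := by
            calc f * m ≤ b := h_f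
              _ < (q + 1) * (m * B) := hR
              _ = (q + 1) * B * m := by ring
          exact lt_of_mul_lt_mul_right h6 (Nat.zero_le m)
        have e' : (q + 1) * B = q * B + B := by ring
        rw [Finset.mem_Ico]
        exact ⟨by omega, h_lt_f⟩
  -- cardinality of F
  have hF_card : F.card ≤ k * (2 * (B - 1)) := by
    calc F.card ≤ ∑ j ∈ Finset.range k,
        ((Finset.Ico ((a + B ^ j - 1) / B ^ j) ((a + B ^ j - 1) / B ^ j + (B - 1)) ∪
          Finset.Ico (b / B ^ j + 1 - B) (b / B ^ j)).image (fun i => (L - j, i))).card :=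
          Finset.card_biUnion_le
      _ ≤ ∑ j ∈ Finset.range k, (2 * (B - 1)) := by
          apply Finset.sum_le_sum
          intro j _
          calc ((Finset.Ico ((a + B ^ j - 1) / B ^ j) ((a + B ^ j - 1) / B ^ j + (B - 1)) ∪
                Finset.Ico (b / B ^ j + 1 - B) (b / B ^ j)).image (fun i => (L - j, i))).card
              ≤ (Finset.Ico ((a + B ^ j - 1) / B ^ j) ((a + B ^ j - 1) / B ^ j + (B - 1)) ∪
                Finset.Ico (b / B ^ j + 1 - B) (b / B ^ j)).card := Finset.card_image_le
            _ ≤ (Finset.Ico ((a + B ^ j - 1) / B ^ j) ((a + B ^ j - 1) / B ^ j + (B - 1))).card +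
                (Finset.Ico (b / B ^ j + 1 - B) (b / B ^ j)).card := Finset.card_union_le _ _
            _ ≤ 2 * (B - 1) := by
                rw [Nat.card_Ico, Nat.card_Ico]
                omega
      _ = k * (2 * (B - 1)) := by
          rw [Finset.sum_const, Finset.card_range, smul_eq_mul]
  -- finiteness
  have himg : ψ '' Slo ⊆ ↑F := by
    rintro x ⟨u, hu, rfl⟩
    exact lo_mem u hu
  have hlo_fin : Slo.Finite :=
    Set.Finite.of_finite_image (F.finite_toSet.subset himg) (hψ_inj.injOn)
  have hhi_fin : Shi.Finite := hi_sub.finite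
  -- assemble
  have hsplit : S ⊆ Slo ∪ Shi := by
    intro u hu
    rcases Nat.lt_or_ge (B ^ (L - u.depth)) n with h | h
    · exact Or.inl ⟨hu, h⟩
    · exact Or.inr ⟨hu, h⟩
  have hlo_card : Slo.ncard ≤ k * (2 * (B - 1)) := by
    calc Slo.ncard = (ψ '' Slo).ncard := (Set.ncard_image_of_injective _ hψ_inj).symm
      _ ≤ (↑F : Set (ℕ × ℕ)).ncard := Set.ncard_le_ncard himg F.finite_toSet
      _ = F.card := Set.ncard_coe_finset F
      _ ≤ k * (2 * (B - 1)) := hF_card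
  have hhi_card : Shi.ncard ≤ 1 := (Set.ncard_le_one hhi_fin).mpr
    (fun x hx y hy => hi_sub hx hy)
  calc S.ncard ≤ (Slo ∪ Shi).ncard :=
        Set.ncard_le_ncard hsplit (hlo_fin.union hhi_fin)
    _ ≤ Slo.ncard + Shi.ncard := Set.ncard_union_le _ _
    _ ≤ k * (2 * (B - 1)) + 1 := by omega
    _ ≤ k * (2 * (B - 1)) + 2 * k := by omega
    _ = k * (2 * (B - 1) + 2) := by ring
    _ = k * (2 * B) := by congr 1; omega
    _ = 2 * B * k := by ring

end TreeNode

/-- For a lexicographic leaf interval `T = [a,b)`, the number of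
maximal covered nodes of `T` is at most `2B·⌈log_B |T|⌉` when `|T| ≥ 2`, and
equals `1` when `T` is the full leaf-set of a single node. -/
theorem maximalCovered_count_bound
    (B L a b : ℕ) (hB : 2 ≤ B) (hb : b ≤ B ^ L) :
    (2 ≤ b - a →
      {u : TreeNode B L | u.maximalCovered (Set.Ico a b)}.ncard
        ≤ 2 * B * Nat.clog B (b - a)) ∧
    (∀ w : TreeNode B L, w.leafSet = Set.Ico a b →
      {u : TreeNode B L | u.maximalCovered (Set.Ico a b)}.ncard = 1) := by
  constructor
  · intro hn
    exact TreeNode.count_bound hB hn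
  · intro w hw
    rw [TreeNode.maximal_eq_singleton hB w hw]
    exact Set.ncard_singleton w
end

section
/- If the level-ℓ nodes covered by an interval T form a contiguous interval I of level-ℓ nodes, then the covered-but-not-subsumed level-ℓ nodes are exactly those elements of I whose parent is not covered; these lie among the first B−1 and last B−1 elements of I, giving at most 2(B−1) such nodes, and at most B−1 if I starts at the lexicographically smallest level-ℓ node. -/
/-- The parent of `u` (at depth one less, with index `u.idx / B`) is covered. -/
def parentCovered {B L : ℕ} (T : Set ℕ) (u : TreeNode B L) : Prop :=
  ∃ p : TreeNode B L, p.depth + 1 = u.depth ∧ p.idx = u.idx / B ∧ p.covered T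

/- ----------------------------------------------------------------- -/
/- Auxiliary lemmas -/

lemma aux_leafSet_anti {B L : ℕ} {u v : TreeNode B L} (h : u.IsPrefix v) :
    v.leafSet ⊆ u.leafSet := by
  rintro x ⟨hx, hdiv⟩
  refine ⟨hx, ?_⟩
  have hv := v.depth_le
  have h1 : L - u.depth = (L - v.depth) + (v.depth - u.depth) := by
    have := h.1; omega
  rw [h1, pow_add, ← Nat.div_div_eq_div_mul, hdiv]
  exact h.2

lemma aux_parent_idx_lt {B L : ℕ} (hB : 0 < B) (u : TreeNode B L) (hu : 1 ≤ u.depth) :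
    u.idx / B < B ^ (u.depth - 1) := by
  have h := u.idx_lt
  have h2 : B ^ u.depth = B ^ (u.depth - 1) * B := by
    rw [← pow_succ]; congr 1; omega
  rw [Nat.div_lt_iff_lt_mul hB]
  omega

lemma aux_subsumed_iff_parentCovered {B L : ℕ} (hB : 0 < B) {T : Set ℕ}
    {u : TreeNode B L} (hu : 1 ≤ u.depth) :
    u.subsumed T ↔ parentCovered T u := by
  constructor
  · rintro ⟨v, ⟨hvd, hvidx⟩, hvcov⟩
    refine ⟨⟨u.depth - 1, u.idx / B, by have := u.depth_le; omega,
      aux_parent_idx_lt hB u hu⟩, show u.depth - 1 + 1 = u.depth by omega, rfl, ?_⟩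
    refine fun x hx => hvcov (aux_leafSet_anti ?_ hx)
    refine ⟨show v.depth ≤ u.depth - 1 by omega, ?_⟩
    show u.idx / B / B ^ (u.depth - 1 - v.depth) = v.idx
    rw [Nat.div_div_eq_div_mul]
    have he : B * B ^ (u.depth - 1 - v.depth) = B ^ (u.depth - v.depth) := by
      rw [← pow_succ']; congr 1; omega
    rw [he] at *
    exact hvidx
  · rintro ⟨p, hpd, hpidx, hpcov⟩
    exact ⟨p, ⟨by omega, by rw [show u.depth - p.depth = 1 by omega, pow_one, hpidx]⟩, hpcov⟩

lemma aux_child_idx_lt {B L : ℕ} (p : TreeNode B L) {j : ℕ} (hj : j < B) :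
    B * p.idx + j < B ^ (p.depth + 1) := by
  have h := p.idx_lt
  rw [pow_succ]
  calc B * p.idx + j < B * (p.idx + 1) := by
        have : B * (p.idx + 1) = B * p.idx + B := by ring
        omega
    _ ≤ B * B ^ p.depth := Nat.mul_le_mul_left _ h
    _ = B ^ p.depth * B := Nat.mul_comm _ _

lemma aux_covered_iff_children {B L : ℕ} (hB : 0 < B) {T : Set ℕ}
    (p : TreeNode B L) (hpL : p.depth < L) :
    p.covered T ↔ ∀ j : ℕ, (hj : j < B) →
      TreeNode.covered T ⟨p.depth + 1, B * p.idx + j, hpL, aux_child_idx_lt p hj⟩ := by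
  constructor
  · intro hcov j hj
    refine fun x hx => hcov (aux_leafSet_anti ?_ hx)
    refine ⟨by simp, ?_⟩
    show (B * p.idx + j) / B ^ (p.depth + 1 - p.depth) = p.idx
    rw [show p.depth + 1 - p.depth = 1 by omega, pow_one, Nat.mul_add_div hB]
    rw [Nat.div_eq_of_lt hj]
    omega
  · rintro hch x ⟨hx, hdiv⟩
    set y := x / B ^ (L - (p.depth + 1)) with hy
    have hyd : y / B = p.idx := by
      rw [hy, Nat.div_div_eq_div_mul, ← pow_succ,
        show L - (p.depth + 1) + 1 = L - p.depth by omega]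
      exact hdiv
    have hmod : y % B < B := Nat.mod_lt _ hB
    have : x ∈ TreeNode.leafSet (⟨p.depth + 1, B * p.idx + y % B, hpL,
        aux_child_idx_lt p hmod⟩ : TreeNode B L) := by
      refine ⟨hx, ?_⟩
      show y = B * p.idx + y % B
      conv_lhs => rw [← Nat.div_add_mod y B]
      rw [hyd]
    exact hch (y % B) hmod this

/-- Suppose the level-`ℓ` nodes covered by the leaf interval
`T = [a,b)` are exactly those with index in `[c,d]`.  Then the covered-but-not-
subsumed level-`ℓ` nodes are exactly those elements of the interval whose
parent is not covered; each such node lies among the first `B−1` or last `B−1`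
elements of the interval; there are at most `2(B−1)` of them, and at most
`B−1` if the interval starts at the lexicographically smallest node (`c = 0`). -/
theorem covered_not_subsumed_description
    (B L a b ℓ c d : ℕ) (hB : 2 ≤ B) (h1 : 1 ≤ ℓ) (hℓ : ℓ ≤ L)
    (hb : b ≤ B ^ L) (hd : d < B ^ ℓ) (hcd : c ≤ d)
    (hI : ∀ u : TreeNode B L, u.depth = ℓ →
      (u.covered (Set.Ico a b) ↔ u.idx ∈ Set.Icc c d)) :
    (∀ u : TreeNode B L, u.depth = ℓ →
      ((u.covered (Set.Ico a b) ∧ ¬ u.subsumed (Set.Ico a b)) ↔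
        (u.idx ∈ Set.Icc c d ∧ ¬ parentCovered (Set.Ico a b) u))) ∧
    (∀ u : TreeNode B L, u.depth = ℓ → u.covered (Set.Ico a b) →
      ¬ u.subsumed (Set.Ico a b) →
      u.idx < c + (B - 1) ∨ d < u.idx + (B - 1)) ∧
    {u : TreeNode B L | u.depth = ℓ ∧ u.covered (Set.Ico a b) ∧
      ¬ u.subsumed (Set.Ico a b)}.ncard ≤ 2 * (B - 1) ∧
    (c = 0 →
      {u : TreeNode B L | u.depth = ℓ ∧ u.covered (Set.Ico a b) ∧
        ¬ u.subsumed (Set.Ico a b)}.ncard ≤ B - 1) := by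
  have hB0 : 0 < B := by omega
  set T : Set ℕ := Set.Ico a b with hT
  -- Part 1
  have part1 : ∀ u : TreeNode B L, u.depth = ℓ →
      ((u.covered T ∧ ¬ u.subsumed T) ↔
        (u.idx ∈ Set.Icc c d ∧ ¬ parentCovered T u)) := by
    intro u hu
    rw [hI u hu, aux_subsumed_iff_parentCovered hB0 (by omega)]
  -- the key structural fact: if u at level ℓ is covered but its parent is not,
  -- then some sibling of u is outside [c, d].
  have key : ∀ u : TreeNode B L, u.depth = ℓ → ¬ parentCovered T u →
      ∃ j, j < B ∧ (B * (u.idx / B) + j < c ∨ d < B * (u.idx / B) + j) := by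
    intro u hu hpc
    have hqlt : u.idx / B < B ^ (ℓ - 1) := by
      have := aux_parent_idx_lt hB0 u (by omega); rwa [hu] at this
    set p : TreeNode B L := ⟨ℓ - 1, u.idx / B, by omega, hqlt⟩ with hp
    have hpnc : ¬ p.covered T := fun hc => hpc ⟨p, show ℓ - 1 + 1 = u.depth by omega, rfl, hc⟩
    have hpL : p.depth < L := show ℓ - 1 < L by omega
    rw [aux_covered_iff_children hB0 p hpL] at hpnc
    push_neg at hpnc
    obtain ⟨j, hj, hjnc⟩ := hpnc
    refine ⟨j, hj, ?_⟩
    have hchd : (⟨p.depth + 1, B * p.idx + j, hpL, aux_child_idx_lt p hj⟩ :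
        TreeNode B L).depth = ℓ := show ℓ - 1 + 1 = ℓ by omega
    have h2 : ¬ (c ≤ B * (u.idx / B) + j ∧ B * (u.idx / B) + j ≤ d) := by
      simpa [hp, Set.mem_Icc] using (hI _ hchd).not.mp hjnc
    omega
  -- Part 2
  have part2 : ∀ u : TreeNode B L, u.depth = ℓ → u.covered T →
      ¬ u.subsumed T → u.idx < c + (B - 1) ∨ d < u.idx + (B - 1) := by
    intro u hu hcov hns
    obtain ⟨hmem, hpc⟩ := (part1 u hu).mp ⟨hcov, hns⟩
    obtain ⟨j, hj, hout⟩ := key u hu hpc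
    simp only [Set.mem_Icc] at hmem
    have hdm := Nat.div_add_mod u.idx B
    have hmod : u.idx % B < B := Nat.mod_lt _ hB0
    omega
  refine ⟨part1, part2, ?_⟩
  -- cardinality bounds
  set S : Set (TreeNode B L) :=
    {u : TreeNode B L | u.depth = ℓ ∧ u.covered T ∧ ¬ u.subsumed T} with hS
  have hinj : Set.InjOn TreeNode.idx S := by
    rintro u ⟨hu, _⟩ v ⟨hv, _⟩ h
    have hduv : u.depth = v.depth := by rw [hu, hv]
    cases u; cases v; simp_all
  have hbound : ∀ F : Finset ℕ, (∀ u ∈ S, u.idx ∈ F) → S.ncard ≤ F.card := by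
    intro F hF
    calc S.ncard = (TreeNode.idx '' S).ncard := (Set.ncard_image_of_injOn hinj).symm
      _ ≤ (↑F : Set ℕ).ncard := by
          refine Set.ncard_le_ncard ?_ F.finite_toSet
          rintro i ⟨u, hu, rfl⟩
          exact hF u hu
      _ = F.card := Set.ncard_coe_finset F
  have hSprop : ∀ u ∈ S, c ≤ u.idx ∧ u.idx ≤ d ∧
      (u.idx < c + (B - 1) ∨ d < u.idx + (B - 1)) := by
    rintro u ⟨hu, hcov, hns⟩
    have hmem := (hI u hu).mp hcov
    simp only [Set.mem_Icc] at hmem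
    exact ⟨hmem.1, hmem.2, part2 u hu hcov hns⟩
  constructor
  · -- at most 2(B-1)
    have := hbound (Finset.Ico c (c + (B - 1)) ∪ Finset.Icc (d + 1 - (B - 1)) d)
      (by
        intro u hu
        obtain ⟨h1', h2', h3'⟩ := hSprop u hu
        simp only [Finset.mem_union, Finset.mem_Ico, Finset.mem_Icc]
        omega)
    refine this.trans ?_
    refine (Finset.card_union_le _ _).trans ?_
    rw [Nat.card_Ico, Nat.card_Icc]
    omega
  · -- c = 0 : at most B-1
    intro hc0
    have hS2 : ∀ u ∈ S, d < u.idx + (B - 1) := by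
      rintro u hu
      obtain ⟨hud, hcov, hns⟩ := hu
      obtain ⟨hmem, hpc⟩ := (part1 u hud).mp ⟨hcov, hns⟩
      obtain ⟨j, hj, hout⟩ := key u hud hpc
      simp only [Set.mem_Icc] at hmem
      have hdm := Nat.div_add_mod u.idx B
      have hmod : u.idx % B < B := Nat.mod_lt _ hB0
      omega
    have := hbound (Finset.Icc (d + 1 - (B - 1)) d)
      (by
        intro u hu
        have h2 := hS2 u hu
        have h3 := (hSprop u hu).2.1
        simp only [Finset.mem_Icc]
        omega)
    refine this.trans ?_
    rw [Nat.card_Icc]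
    omega
end
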